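/- In the linear Gaussian setting, let π be the posterior N((C_A+I)^{−1}u, (C_A+I)^{−1}) with u = A^T y, C_A = A^T A, and H_1 = ∫∇log f ∇log f^T π dx with ∇log f(x) = A^T(Ax−y). Then H_1 = C_A(C_A+I)^{−1}C_A + (C_A+I)^{−1} u u^T (C_A+I)^{−1}, and λ_{k+1}(H_1) ≤ λ_k(C_A)²/(1 + λ_k(C_A)) for every k. -/

import Mathlib

open MeasureTheory Matrix Real

noncomputable def oneD (c : ℝ) (n : ℕ) : ℝ → ℝ := fun s => s^n * Real.exp (-(c/2) * s^2)

lemma int_oneD {c : ℝ} (hc : 0 < c) (n : ℕ) : Integrable (oneD c n) := by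
  have h := integrable_rpow_mul_exp_neg_mul_sq (b := c/2) (by linarith)
    (s := (n:ℝ)) (by exact lt_of_lt_of_le neg_one_lt_zero (Nat.cast_nonneg n))
  have h' : Integrable (fun x : ℝ => x ^ n * Real.exp (-(c/2) * x ^ 2)) := by
    apply h.congr
    filter_upwards with x
    rw [Real.rpow_natCast]
  exact h'

lemma oneD_zero_pos {c : ℝ} (hc : 0 < c) : 0 < ∫ s, oneD c 0 s := by
  have : ∫ s, oneD c 0 s = Real.sqrt (π / (c/2)) := by
    rw [← integral_gaussian (c/2)]
    congr 1; ext s; simp [oneD]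
  rw [this]
  apply Real.sqrt_pos.mpr
  positivity

lemma oneD_one_zero {c : ℝ} : ∫ s, oneD c 1 s = 0 := by
  have h1 : ∫ s, oneD c 1 (-s) = ∫ s, oneD c 1 s := integral_neg_eq_self _ _
  have h2 : ∀ s, oneD c 1 (-s) = - oneD c 1 s := by
    intro s
    simp only [oneD, pow_one, neg_sq, neg_mul]
  simp_rw [h2] at h1
  rw [integral_neg] at h1
  linarith

lemma oneD_two_eq {c : ℝ} (hc : 0 < c) : ∫ s, oneD c 2 s = (1/c) * ∫ s, oneD c 0 s := by
  have hu : ∀ x : ℝ, HasDerivAt (fun s : ℝ => s) 1 x := fun x => hasDerivAt_id x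
  have hv : ∀ x : ℝ, HasDerivAt (fun s : ℝ => -(1/c) * Real.exp (-(c/2) * s^2))
      (x * Real.exp (-(c/2) * x^2)) x := by
    intro x
    have hg : HasDerivAt (fun s : ℝ => -(c/2) * s^2) (-(c/2) * (2*x)) x := by
      simpa using (hasDerivAt_pow 2 x).const_mul (-(c/2))
    have he := hg.exp
    have h3 := he.const_mul (-(1/c))
    refine h3.congr_deriv ?_
    field_simp
  have huv' : Integrable ((fun s : ℝ => s) * (fun x : ℝ => x * Real.exp (-(c/2) * x^2))) := by
    apply (int_oneD hc 2).congr
    filter_upwards with x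
    simp only [oneD, Pi.mul_apply]; ring
  have hu'v : Integrable ((fun _ : ℝ => (1:ℝ)) * (fun x : ℝ => -(1/c) * Real.exp (-(c/2) * x^2))) := by
    apply ((int_oneD hc 0).const_mul (-(1/c))).congr
    filter_upwards with x
    simp only [oneD, Pi.mul_apply, pow_zero]; ring
  have huv : Integrable ((fun s : ℝ => s) * (fun x : ℝ => -(1/c) * Real.exp (-(c/2) * x^2))) := by
    apply ((int_oneD hc 1).const_mul (-(1/c))).congr
    filter_upwards with x
    simp only [oneD, Pi.mul_apply, pow_one]; ring
  have key := integral_mul_deriv_eq_deriv_mul_of_integrable (fun x _ => hu x) (fun x _ => hv x) huv' hu'v huv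
  have e1 : ∫ x : ℝ, x * (x * Real.exp (-(c/2) * x^2)) = ∫ s, oneD c 2 s := by
    congr 1; ext x; simp only [oneD]; ring
  have e2 : ∫ x : ℝ, (1:ℝ) * (-(1/c) * Real.exp (-(c/2) * x^2))
      = -(1/c) * ∫ s, oneD c 0 s := by
    rw [← integral_const_mul]
    congr 1; ext x; simp only [oneD, pow_zero]; ring
  rw [e1, e2] at key
  rw [key]; ring

lemma quad_form (U : Matrix (Fin d) (Fin d) ℝ) (e x : Fin d → ℝ) :
    x ⬝ᵥ (U * diagonal e * star U) *ᵥ x = ∑ j, e j * ((star U *ᵥ x) j)^2 := by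
  have hsU : star U = Uᵀ := by
    rw [Matrix.star_eq_conjTranspose, conjTranspose_eq_transpose_of_trivial]
  rw [← mulVec_mulVec, ← mulVec_mulVec, dotProduct_mulVec, ← mulVec_transpose, ← hsU]
  simp only [dotProduct, mulVec_diagonal]
  exact Finset.sum_congr rfl (fun j _ => by ring)

lemma norm_form (U : Matrix (Fin d) (Fin d) ℝ) (hU : U * star U = 1) (x : Fin d → ℝ) :
    ∑ j, ((star U *ᵥ x) j)^2 = x ⬝ᵥ x := by
  have hsU : star U = Uᵀ := by
    rw [Matrix.star_eq_conjTranspose, conjTranspose_eq_transpose_of_trivial]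
  have h1 : ∑ j, ((star U *ᵥ x) j)^2 = (star U *ᵥ x) ⬝ᵥ (star U *ᵥ x) := by
    simp [dotProduct, sq]
  rw [hsU] at hU
  rw [h1, hsU, dotProduct_mulVec, vecMul_transpose, mulVec_mulVec, hU, one_mulVec]

lemma quad_vecMulVec (w x : Fin d → ℝ) :
    x ⬝ᵥ (vecMulVec w w) *ᵥ x = (w ⬝ᵥ x)^2 := by
  simp only [dotProduct, mulVec, vecMulVec_apply, dotProduct, sq, Finset.mul_sum, Finset.sum_mul]
  exact Finset.sum_congr rfl fun i _ => Finset.sum_congr rfl fun j _ => by ring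

lemma eig_bound (C : Matrix (Fin d) (Fin d) ℝ) (hC : C.IsHermitian)
    (hCpsd : C.PosSemidef) (u : Fin d → ℝ)
    (hM : (C * (C+1)⁻¹ * C + (C+1)⁻¹ * vecMulVec u u * (C+1)⁻¹).IsHermitian)
    (μ1 μC : Fin d → ℝ) (ha1 : Antitone μ1) (haC : Antitone μC)
    (e1 : ∃ σ : Equiv.Perm (Fin d), μ1 = hM.eigenvalues ∘ σ)
    (eC : ∃ σ : Equiv.Perm (Fin d), μC = hC.eigenvalues ∘ σ)
    (k : ℕ) (hk : k + 1 < d) :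
    μ1 ⟨k+1, hk⟩ ≤ (μC ⟨k, Nat.lt_of_succ_lt hk⟩)^2 / (1 + μC ⟨k, Nat.lt_of_succ_lt hk⟩) := by
  obtain ⟨σ1, hσ1⟩ := e1
  obtain ⟨σC, hσC⟩ := eC
  set ev := hC.eigenvalues with hev
  set U : Matrix (Fin d) (Fin d) ℝ := (hC.eigenvectorUnitary : Matrix (Fin d) (Fin d) ℝ) with hUdef
  have hU1 : U * star U = 1 := mem_unitaryGroup_iff.mp hC.eigenvectorUnitary.2
  have hU1' : star U * U = 1 := mem_unitaryGroup_iff'.mp hC.eigenvectorUnitary.2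
  have spec : C = U * diagonal ev * star U := by
    simpa using hC.spectral_theorem
  have evnn : ∀ i, 0 ≤ ev i := hCpsd.eigenvalues_nonneg
  have hpos : ∀ j, (0:ℝ) < ev j + 1 := fun j => by have := evnn j; linarith
  -- B = C + 1
  have hBspec : C + 1 = U * diagonal (fun j => ev j + 1) * star U := by
    have h1 : (1 : Matrix (Fin d) (Fin d) ℝ) = U * (1 : Matrix (Fin d) (Fin d) ℝ) * star U := by
      rw [mul_one, hU1]
    calc C + 1 = U * diagonal ev * star U + U * 1 * star U := by rw [← spec, ← h1]
      _ = U * (diagonal ev + 1) * star U := by noncomm_ring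
      _ = U * diagonal (fun j => ev j + 1) * star U := by
          rw [← diagonal_one, diagonal_add]
  have hBinv : (C + 1)⁻¹ = U * diagonal (fun j => (ev j + 1)⁻¹) * star U := by
    apply inv_eq_right_inv
    rw [hBspec]
    calc (U * diagonal (fun j => ev j + 1) * star U) * (U * diagonal (fun j => (ev j + 1)⁻¹) * star U)
        = U * (diagonal (fun j => ev j + 1) * (star U * U) * diagonal (fun j => (ev j + 1)⁻¹)) * star U := by
          noncomm_ring
      _ = U * (diagonal (fun j => ev j + 1) * diagonal (fun j => (ev j + 1)⁻¹)) * star U := by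
          rw [hU1', mul_one]
      _ = U * 1 * star U := by
          rw [diagonal_mul_diagonal]
          have hfun : (fun j => (ev j + 1) * (ev j + 1)⁻¹) = fun _ => (1:ℝ) :=
            funext fun j => mul_inv_cancel₀ (ne_of_gt (hpos j))
          rw [hfun, diagonal_one]
      _ = 1 := by rw [mul_one, hU1]
  set gv : Fin d → ℝ := fun j => (ev j)^2 / (1 + ev j) with hgv
  have hS : C * (C+1)⁻¹ * C = U * diagonal gv * star U := by
    rw [hBinv, spec]
    calc (U * diagonal ev * star U) * (U * diagonal (fun j => (ev j + 1)⁻¹) * star U) * (U * diagonal ev * star U)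
        = U * (diagonal ev * (star U * U) * diagonal (fun j => (ev j + 1)⁻¹) * (star U * U) * diagonal ev) * star U := by
          noncomm_ring
      _ = U * (diagonal ev * diagonal (fun j => (ev j + 1)⁻¹) * diagonal ev) * star U := by
          rw [hU1']; noncomm_ring
      _ = U * diagonal gv * star U := by
          rw [diagonal_mul_diagonal, diagonal_mul_diagonal]
          congr 1
          congr 2; funext j
          have := hpos j
          simp only [hgv]
          ring
  -- the rank one part
  set w : Fin d → ℝ := (C+1)⁻¹ *ᵥ u with hw
  have hBsymm : ((C+1)⁻¹)ᵀ = (C+1)⁻¹ := by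
    have h1 : (C+1).IsHermitian := hC.add isHermitian_one
    have h2 : ((C+1)⁻¹).IsHermitian := h1.inv
    rw [← conjTranspose_eq_transpose_of_trivial]
    exact h2
  have hR : (C+1)⁻¹ * vecMulVec u u * (C+1)⁻¹ = vecMulVec w w := by
    rw [vecMulVec_eq Unit, vecMulVec_eq Unit, hw]
    have hcol : replicateCol Unit ((C+1)⁻¹ *ᵥ u) = (C+1)⁻¹ * replicateCol Unit u := rfl
    have hrow : replicateRow Unit ((C+1)⁻¹ *ᵥ u) = replicateRow Unit u * (C+1)⁻¹ := by
      have h2 : ((C+1)⁻¹)ᵀ *ᵥ u = u ᵥ* (C+1)⁻¹ := mulVec_transpose _ u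
      rw [hBsymm] at h2
      rw [h2]; rfl
    rw [hcol, hrow]
    simp only [Matrix.mul_assoc]
  set M := C * (C+1)⁻¹ * C + (C+1)⁻¹ * vecMulVec u u * (C+1)⁻¹ with hMdef
  set P : Matrix (Fin d) (Fin d) ℝ := (hM.eigenvectorUnitary : Matrix (Fin d) (Fin d) ℝ) with hPdef
  have hP1 : P * star P = 1 := mem_unitaryGroup_iff.mp hM.eigenvectorUnitary.2
  have specM : M = P * diagonal hM.eigenvalues * star P := by
    simpa using hM.spectral_theorem
  -- quadratic forms
  have qM : ∀ x : Fin d → ℝ, x ⬝ᵥ M *ᵥ x = ∑ j, hM.eigenvalues j * ((star P *ᵥ x) j)^2 := by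
    intro x
    have h := quad_form P hM.eigenvalues x
    rw [← specM] at h
    exact h
  have qM' : ∀ x : Fin d → ℝ, x ⬝ᵥ M *ᵥ x = x ⬝ᵥ (C * (C+1)⁻¹ * C) *ᵥ x + ((C+1)⁻¹ *ᵥ u ⬝ᵥ x)^2 := by
    intro x
    rw [hMdef, add_mulVec, dotProduct_add, hR, quad_vecMulVec, hw]
  have qS : ∀ x : Fin d → ℝ, x ⬝ᵥ (C * (C+1)⁻¹ * C) *ᵥ x = ∑ j, gv j * ((star U *ᵥ x) j)^2 := by
    intro x; rw [hS]; exact quad_form U gv x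
  -- the constraint map
  have hd2 : k + 2 ≤ d := hk
  let L : (Fin d → ℝ) →ₗ[ℝ] ((Fin k ⊕ Unit ⊕ Fin (d - (k+2))) → ℝ) :=
    { toFun := fun x t =>
        match t with
        | Sum.inl i => (star U *ᵥ x) (σC ⟨i.1, by omega⟩)
        | Sum.inr (Sum.inl _) => w ⬝ᵥ x
        | Sum.inr (Sum.inr i) => (star P *ᵥ x) (σ1 ⟨k+2+i.1, by omega⟩)
      map_add' := by
        intro a b; funext t
        rcases t with i | t'
        · simp [mulVec_add]
        · rcases t' with _ | i
          · simp [dotProduct_add]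
          · simp [mulVec_add]
      map_smul' := by
        intro r a; funext t
        rcases t with i | t'
        · simp [mulVec_smul]
        · rcases t' with _ | i
          · simp [dotProduct_smul, smul_eq_mul]
          · simp [mulVec_smul] }
  have hker : LinearMap.ker L ≠ ⊥ := by
    apply LinearMap.ker_ne_bot_of_finrank_lt
    simp only [Module.finrank_pi]
    rw [Fintype.card_sum, Fintype.card_sum]
    simp only [Fintype.card_fin, Fintype.card_unit]
    omega
  obtain ⟨x, hxker, hxne⟩ := Submodule.ne_bot_iff _ |>.mp hker
  have hLx : ∀ t, L x t = 0 := by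
    have := LinearMap.mem_ker.mp hxker
    intro t; rw [this]; rfl
  have hcC : ∀ i : Fin d, i.1 < k → (star U *ᵥ x) (σC i) = 0 := by
    intro i hik
    have := hLx (Sum.inl ⟨i.1, hik⟩)
    simpa [L] using this
  have hwx : w ⬝ᵥ x = 0 := by
    have := hLx (Sum.inr (Sum.inl ()))
    simpa [L] using this
  have hbP : ∀ i : Fin d, k + 2 ≤ i.1 → (star P *ᵥ x) (σ1 i) = 0 := by
    intro i hik
    have hlt : i.1 - (k+2) < d - (k+2) := by omega
    have := hLx (Sum.inr (Sum.inr ⟨i.1 - (k+2), hlt⟩))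
    have heq : (⟨k + 2 + (i.1 - (k+2)), by omega⟩ : Fin d) = i := by
      apply Fin.ext; simp; omega
    simpa [L, heq] using this
  -- positivity of the norm
  have hnormpos : 0 < x ⬝ᵥ x := by
    obtain ⟨i, hi⟩ := Function.ne_iff.mp hxne
    have : (0:ℝ) < x i ^ 2 := pow_two_pos_of_ne_zero hi
    rw [dotProduct]
    apply Finset.sum_pos' (fun j _ => mul_self_nonneg _)
    exact ⟨i, Finset.mem_univ i, by nlinarith⟩
  have hnormc : ∑ j, ((star U *ᵥ x) j)^2 = x ⬝ᵥ x := norm_form U hU1 x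
  have hnormb : ∑ j, ((star P *ᵥ x) j)^2 = x ⬝ᵥ x := norm_form P hP1 x
  set a : ℝ := μC ⟨k, by omega⟩ with ha
  have hμCnn : ∀ i : Fin d, 0 ≤ μC i := by
    intro i; rw [hσC]; exact evnn _
  -- upper bound
  have hupper : x ⬝ᵥ M *ᵥ x ≤ (a^2 / (1 + a)) * (x ⬝ᵥ x) := by
    rw [qM' x, hwx]
    rw [qS x]
    have hre : ∑ j, gv j * ((star U *ᵥ x) j)^2
        = ∑ i, gv (σC i) * ((star U *ᵥ x) (σC i))^2 := by
      exact (Equiv.sum_comp σC (fun j => gv j * ((star U *ᵥ x) j)^2)).symm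
    rw [sq (0:ℝ), mul_zero, add_zero, hre, ← hnormc,
      ← Equiv.sum_comp σC (fun j => ((star U *ᵥ x) j)^2), Finset.mul_sum]
    apply Finset.sum_le_sum
    intro i _
    by_cases hik : i.1 < k
    · rw [hcC i hik]
      simp
    · push_neg at hik
      have hgvi : gv (σC i) = (μC i)^2 / (1 + μC i) := by
        rw [hσC]; simp [hgv]
      have hle : μC i ≤ a := by
        rw [ha]; exact haC (by exact hik)
      have h0i : 0 ≤ μC i := hμCnn i
      have h0a : 0 ≤ a := hμCnn _
      have hmono : (μC i)^2 / (1 + μC i) ≤ a^2 / (1 + a) := by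
        rw [div_le_div_iff₀ (by linarith) (by linarith)]
        nlinarith [mul_nonneg (sub_nonneg.mpr hle) (add_nonneg (add_nonneg h0a h0i) (mul_nonneg h0a h0i))]
      rw [hgvi]
      exact mul_le_mul_of_nonneg_right hmono (sq_nonneg _)
  -- lower bound
  have hlower : μ1 ⟨k+1, hk⟩ * (x ⬝ᵥ x) ≤ x ⬝ᵥ M *ᵥ x := by
    rw [qM x, ← hnormb,
      ← Equiv.sum_comp σ1 (fun j => hM.eigenvalues j * ((star P *ᵥ x) j)^2),
      ← Equiv.sum_comp σ1 (fun j => ((star P *ᵥ x) j)^2), Finset.mul_sum]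
    apply Finset.sum_le_sum
    intro i _
    by_cases hik : i.1 < k + 2
    · have h1 : μ1 ⟨k+1, hk⟩ ≤ hM.eigenvalues (σ1 i) := by
        have : hM.eigenvalues (σ1 i) = μ1 i := by rw [hσ1]; rfl
        rw [this]
        exact ha1 (by exact Nat.lt_succ_iff.mp hik)
      exact mul_le_mul_of_nonneg_right h1 (sq_nonneg _)
    · push_neg at hik
      rw [hbP i hik]
      simp
  have := hlower.trans hupper
  have := (mul_le_mul_iff_of_pos_right hnormpos).mp this
  exact this

variable {d : ℕ}

lemma sep_integrable (c : Fin d → ℝ) (hc : ∀ p, 0 < c p) (n : Fin d → ℕ) :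
    Integrable (fun t : Fin d → ℝ => ∏ p, oneD (c p) (n p) (t p)) :=
  Integrable.fintype_prod (fun p => int_oneD (hc p) (n p))

lemma sep_integral (c : Fin d → ℝ) (n : Fin d → ℕ) :
    ∫ t : Fin d → ℝ, ∏ p, oneD (c p) (n p) (t p) = ∏ p, ∫ s, oneD (c p) (n p) s :=
  integral_fintype_prod_eq_prod _

lemma prod_single_pow (t : Fin d → ℝ) (p : Fin d) :
    ∏ r, (t r)^(if r = p then 1 else 0) = t p := by
  rw [Finset.prod_congr rfl (fun r _ => by rw [pow_ite, pow_one, pow_zero])]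
  simp [Finset.prod_ite_eq']

lemma mono_eq_pq (c : Fin d → ℝ) (p q : Fin d) (t : Fin d → ℝ) :
    ∏ r, oneD (c r) ((if r = p then 1 else 0) + (if r = q then 1 else 0)) (t r)
      = t p * t q * ∏ r, Real.exp (-(c r/2) * (t r)^2) := by
  simp only [oneD, pow_add]
  rw [Finset.prod_mul_distrib, Finset.prod_mul_distrib, prod_single_pow, prod_single_pow]

lemma mono_eq_p (c : Fin d → ℝ) (p : Fin d) (t : Fin d → ℝ) :
    ∏ r, oneD (c r) (if r = p then 1 else 0) (t r)
      = t p * ∏ r, Real.exp (-(c r/2) * (t r)^2) := by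
  simp only [oneD]
  rw [Finset.prod_mul_distrib, prod_single_pow]

lemma mono_eq_zero (c : Fin d → ℝ) (t : Fin d → ℝ) :
    ∏ r, oneD (c r) 0 (t r) = ∏ r, Real.exp (-(c r/2) * (t r)^2) := by
  simp [oneD]

lemma val_pq (c : Fin d → ℝ) (p q : Fin d) (hne : p ≠ q) :
    ∏ r, ∫ s, oneD (c r) ((if r = p then 1 else 0) + (if r = q then 1 else 0)) s = 0 := by
  apply Finset.prod_eq_zero (Finset.mem_univ p)
  rw [if_pos rfl, if_neg (fun h : p = q => hne h)]
  exact oneD_one_zero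

lemma val_p (c : Fin d → ℝ) (p : Fin d) :
    ∏ r, ∫ s, oneD (c r) (if r = p then 1 else 0) s = 0 := by
  apply Finset.prod_eq_zero (Finset.mem_univ p)
  rw [if_pos rfl]
  exact oneD_one_zero

lemma val_pp (c : Fin d → ℝ) (hc : ∀ p, 0 < c p) (p : Fin d) :
    ∏ r, ∫ s, oneD (c r) ((if r = p then 1 else 0) + (if r = p then 1 else 0)) s
      = (1/(c p)) * ∏ r, ∫ s, oneD (c r) 0 s := by
  have hexp : ∀ r : Fin d, (if r = p then 1 else 0) + (if r = p then 1 else 0)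
      = if r = p then 2 else 0 := by intro r; split <;> rfl
  simp_rw [hexp]
  rw [← Finset.prod_erase_mul _ _ (Finset.mem_univ p),
      ← Finset.prod_erase_mul _ _ (Finset.mem_univ p)]
  have hcongr : ∏ r ∈ Finset.univ.erase p, (∫ s, oneD (c r) (if r = p then 2 else 0) s)
      = ∏ r ∈ Finset.univ.erase p, ∫ s, oneD (c r) 0 s := by
    apply Finset.prod_congr rfl
    intro r hr
    rw [if_neg (Finset.ne_of_mem_erase hr)]
  rw [hcongr, if_pos rfl, oneD_two_eq (hc p)]
  ring

lemma H1_eq {d dy : ℕ} (A : Matrix (Fin dy) (Fin d) ℝ) (y : Fin dy → ℝ)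
    (μ : (Fin d → ℝ) → ℝ)
    (hμ : ∀ x, μ x = (2 * Real.pi) ^ (-(d : ℝ) / 2) * Real.exp (-(∑ i, (x i) ^ 2) / 2))
    (f : (Fin d → ℝ) → ℝ)
    (hf : ∀ x, f x = Real.exp (-(∑ i, (A.mulVec x i - y i) ^ 2) / 2))
    (Z : ℝ) (hZ : Z = ∫ x, f x * μ x)
    (H1 : Matrix (Fin d) (Fin d) ℝ)
    (hH1 : ∀ i j, H1 i j =
      ∫ x, (Aᵀ.mulVec (A.mulVec x - y) i) * (Aᵀ.mulVec (A.mulVec x - y) j) *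
        (f x * μ x / Z)) :
    H1 = (Aᵀ * A) * (Aᵀ * A + 1)⁻¹ * (Aᵀ * A) +
        (Aᵀ * A + 1)⁻¹ * Matrix.vecMulVec (Aᵀ.mulVec y) (Aᵀ.mulVec y) *
          (Aᵀ * A + 1)⁻¹ := by
  classical
  set C := Aᵀ * A with hCdef
  have hC : C.IsHermitian := by simpa [conjTranspose_eq_transpose_of_trivial] using isHermitian_conjTranspose_mul_self A
  have hCpsd : C.PosSemidef := by
    have h := posSemidef_conjTranspose_mul_self A
    rwa [conjTranspose_eq_transpose_of_trivial] at h
  set u : Fin d → ℝ := Aᵀ *ᵥ y with hudef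
  set ev := hC.eigenvalues with hev
  set U : Matrix (Fin d) (Fin d) ℝ := (hC.eigenvectorUnitary : Matrix (Fin d) (Fin d) ℝ) with hUdef
  have hU1 : U * star U = 1 := mem_unitaryGroup_iff.mp hC.eigenvectorUnitary.2
  have hU1' : star U * U = 1 := mem_unitaryGroup_iff'.mp hC.eigenvectorUnitary.2
  have spec : C = U * diagonal ev * star U := by simpa using hC.spectral_theorem
  have evnn : ∀ i, 0 ≤ ev i := hCpsd.eigenvalues_nonneg
  have hpos : ∀ j, (0:ℝ) < ev j + 1 := fun j => by have := evnn j; linarith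
  set dc : Fin d → ℝ := fun j => ev j + 1 with hdc
  have hBspec : C + 1 = U * diagonal dc * star U := by
    have h1 : (1 : Matrix (Fin d) (Fin d) ℝ) = U * (1 : Matrix (Fin d) (Fin d) ℝ) * star U := by
      rw [mul_one, hU1]
    calc C + 1 = U * diagonal ev * star U + U * 1 * star U := by rw [← spec, ← h1]
      _ = U * (diagonal ev + 1) * star U := by noncomm_ring
      _ = U * diagonal dc * star U := by rw [← diagonal_one, diagonal_add]
  have hBright : (C + 1) * (U * diagonal (fun j => (dc j)⁻¹) * star U) = 1 := by
    rw [hBspec]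
    calc (U * diagonal dc * star U) * (U * diagonal (fun j => (dc j)⁻¹) * star U)
        = U * (diagonal dc * (star U * U) * diagonal (fun j => (dc j)⁻¹)) * star U := by
          noncomm_ring
      _ = U * (diagonal dc * diagonal (fun j => (dc j)⁻¹)) * star U := by
          rw [hU1', mul_one]
      _ = U * 1 * star U := by
          rw [diagonal_mul_diagonal]
          have hfun : (fun j => dc j * (dc j)⁻¹) = fun _ => (1:ℝ) :=
            funext fun j => mul_inv_cancel₀ (ne_of_gt (hpos j))
          rw [hfun, diagonal_one]
      _ = 1 := by rw [mul_one, hU1]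
  have hBinv : (C + 1)⁻¹ = U * diagonal (fun j => (dc j)⁻¹) * star U :=
    inv_eq_right_inv hBright
  have hBB : (C + 1) * (C + 1)⁻¹ = 1 := by rw [hBinv]; exact hBright
  set gv : Fin d → ℝ := fun j => (ev j)^2 / (1 + ev j) with hgv
  have hS : C * (C+1)⁻¹ * C = U * diagonal gv * star U := by
    rw [hBinv, spec]
    calc (U * diagonal ev * star U) * (U * diagonal (fun j => (dc j)⁻¹) * star U) * (U * diagonal ev * star U)
        = U * (diagonal ev * (star U * U) * diagonal (fun j => (dc j)⁻¹) * (star U * U) * diagonal ev) * star U := by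
          noncomm_ring
      _ = U * (diagonal ev * diagonal (fun j => (dc j)⁻¹) * diagonal ev) * star U := by
          rw [hU1']; noncomm_ring
      _ = U * diagonal gv * star U := by
          rw [diagonal_mul_diagonal, diagonal_mul_diagonal]
          have harg : (fun i => ev i * (dc i)⁻¹ * ev i) = gv := by
            funext j
            have h0 : (1 + ev j) ≠ 0 := by have := hpos j; intro h; apply absurd this; linarith
            have h0' : (ev j + 1) ≠ 0 := by have := hpos j; intro h; apply absurd this; linarith
            rw [hgv, hdc]
            field_simp
            ring
          rw [harg]
  set m : Fin d → ℝ := (C+1)⁻¹ *ᵥ u with hm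
  have hBm : (C+1) *ᵥ m = u := by rw [hm, mulVec_mulVec, hBB, one_mulVec]
  have hBsymm : ((C+1)⁻¹)ᵀ = (C+1)⁻¹ := by
    have h1 : (C+1).IsHermitian := hC.add isHermitian_one
    have h2 : ((C+1)⁻¹).IsHermitian := h1.inv
    rw [← conjTranspose_eq_transpose_of_trivial]
    exact h2
  have hBsymm' : (C+1)ᵀ = C+1 := by
    have h1 : (C+1).IsHermitian := hC.add isHermitian_one
    rw [← conjTranspose_eq_transpose_of_trivial]
    exact h1
  have hR : (C+1)⁻¹ * vecMulVec u u * (C+1)⁻¹ = vecMulVec m m := by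
    rw [vecMulVec_eq Unit, vecMulVec_eq Unit, hm]
    have hcol : replicateCol Unit ((C+1)⁻¹ *ᵥ u) = (C+1)⁻¹ * replicateCol Unit u := rfl
    have hrow : replicateRow Unit ((C+1)⁻¹ *ᵥ u) = replicateRow Unit u * (C+1)⁻¹ := by
      have h2 : ((C+1)⁻¹)ᵀ *ᵥ u = u ᵥ* (C+1)⁻¹ := mulVec_transpose _ u
      rw [hBsymm] at h2
      rw [h2]; rfl
    rw [hcol, hrow]
    simp only [Matrix.mul_assoc]
  -- determinant of U
  have hdet2 : U.det * U.det = 1 := by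
    have h := congrArg det hU1
    rwa [det_mul, Matrix.star_eq_conjTranspose, conjTranspose_eq_transpose_of_trivial,
      det_transpose, det_one] at h
  have habs : |U.det| = 1 := by
    have h1 : |U.det| * |U.det| = 1 := by rw [← abs_mul, hdet2, abs_one]
    nlinarith [abs_nonneg U.det]
  have hdet0 : U.det ≠ 0 := by
    intro h0; rw [h0, abs_zero] at habs; norm_num at habs
  have hmap : Measure.map (Matrix.toLin' U) volume = volume := by
    rw [Real.map_matrix_volume_pi_eq_smul_volume_pi hdet0, abs_inv, habs, inv_one,
      ENNReal.ofReal_one, one_smul]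
  have rotate : ∀ g : (Fin d → ℝ) → ℝ, Measurable g →
      ∫ z, g z = ∫ t, g (U *ᵥ t) := by
    intro g hg
    have h1 : ∫ z, g z = ∫ z, g z ∂(Measure.map (Matrix.toLin' U) volume) := by rw [hmap]
    rw [h1, integral_map (Measurable.aemeasurable (by
        exact LinearMap.continuous_on_pi _ |>.measurable))
      (hg.aestronglyMeasurable.mono_ac (by rw [hmap]))]
    simp_rw [Matrix.toLin'_apply]
  -- measurability helpers
  have measmv : ∀ (M : Matrix (Fin d) (Fin d) ℝ) (i : Fin d),
      Measurable fun z : Fin d → ℝ => (M *ᵥ z) i := by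
    intro M i
    simp only [mulVec, dotProduct]
    exact Finset.measurable_sum _ fun p _ => (measurable_pi_apply p).const_mul _
  have measquad : Measurable fun z : Fin d → ℝ => Real.exp (-(z ⬝ᵥ (C+1) *ᵥ z)/2) := by
    apply Real.measurable_exp.comp
    apply Measurable.div_const
    apply Measurable.neg
    simp only [dotProduct]
    exact Finset.measurable_sum _ fun p _ => (measurable_pi_apply p).mul (measmv _ p)
  -- quadratic diagonalization
  have quadB : ∀ t : Fin d → ℝ, (U *ᵥ t) ⬝ᵥ (C+1) *ᵥ (U *ᵥ t) = ∑ p, dc p * (t p)^2 := by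
    intro t
    rw [hBspec, quad_form]
    congr 1
    ext p
    rw [mulVec_mulVec, hU1', one_mulVec]
  have eprod : ∀ t : Fin d → ℝ, Real.exp (-((U *ᵥ t) ⬝ᵥ (C+1) *ᵥ (U *ᵥ t))/2)
      = ∏ r, Real.exp (-(dc r/2) * (t r)^2) := by
    intro t
    have h3 : -((∑ p, dc p * (t p)^2)/2) = ∑ r, (-(dc r/2) * (t r)^2) := by
      rw [Finset.sum_div, ← Finset.sum_neg_distrib]
      exact Finset.sum_congr rfl fun r _ => by ring
    rw [quadB, neg_div, h3, Real.exp_sum]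
  -- the scalar quadratic identity
  have hquad : ∀ x : Fin d → ℝ, (∑ i, (A.mulVec x i - y i)^2) + ∑ i, (x i)^2
      = (x - m) ⬝ᵥ (C+1) *ᵥ (x - m) + (y ⬝ᵥ y - m ⬝ᵥ (C+1) *ᵥ m) := by
    intro x
    have e1 : ∑ i, (A.mulVec x i - y i)^2 = (A *ᵥ x - y) ⬝ᵥ (A *ᵥ x - y) := by
      simp only [dotProduct, Pi.sub_apply, sq]
    have hAA : (A *ᵥ x) ⬝ᵥ (A *ᵥ x) = x ⬝ᵥ C *ᵥ x := by
      rw [hCdef, ← mulVec_mulVec, dotProduct_mulVec x Aᵀ, vecMul_transpose]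
    have hyA : y ⬝ᵥ (A *ᵥ x) = u ⬝ᵥ x := by
      rw [dotProduct_mulVec y A, hudef, mulVec_transpose]
    have hAy : (A *ᵥ x) ⬝ᵥ y = u ⬝ᵥ x := by rw [dotProduct_comm]; exact hyA
    have e2 : (A *ᵥ x - y) ⬝ᵥ (A *ᵥ x - y) = x ⬝ᵥ C *ᵥ x - 2*(u ⬝ᵥ x) + y ⬝ᵥ y := by
      rw [dotProduct_sub, sub_dotProduct, sub_dotProduct, hAA, hAy, hyA]
      ring
    have e3 : ∑ i, (x i)^2 = x ⬝ᵥ x := by simp only [dotProduct, sq]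
    have hmx : m ⬝ᵥ (C+1) *ᵥ x = u ⬝ᵥ x := by
      rw [dotProduct_mulVec, ← mulVec_transpose, hBsymm', hBm]
    have hxm : x ⬝ᵥ (C+1) *ᵥ m = u ⬝ᵥ x := by rw [hBm, dotProduct_comm]
    have e4 : (x - m) ⬝ᵥ (C+1) *ᵥ (x - m)
        = x ⬝ᵥ (C+1) *ᵥ x - 2*(u ⬝ᵥ x) + m ⬝ᵥ (C+1) *ᵥ m := by
      rw [mulVec_sub, dotProduct_sub, sub_dotProduct, sub_dotProduct, hmx, hxm]
      ring
    have e5 : x ⬝ᵥ (C+1) *ᵥ x = x ⬝ᵥ C *ᵥ x + x ⬝ᵥ x := by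
      rw [add_mulVec, one_mulVec, dotProduct_add]
    rw [e1, e2, e3, e4, e5]
    ring
  set K : ℝ := (2 * Real.pi) ^ (-(d : ℝ) / 2) *
    Real.exp (-(y ⬝ᵥ y - m ⬝ᵥ (C+1) *ᵥ m)/2) with hK
  have hfμ : ∀ x, f x * μ x = K * Real.exp (-((x - m) ⬝ᵥ (C+1) *ᵥ (x - m))/2) := by
    intro x
    rw [hf, hμ, hK]
    have hsum := hquad x
    calc Real.exp ((-∑ i, (A.mulVec x i - y i)^2)/2) *
          ((2 * Real.pi) ^ (-(d : ℝ) / 2) * Real.exp ((-∑ i, (x i)^2)/2))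
        = (2 * Real.pi) ^ (-(d : ℝ) / 2) *
            Real.exp ((-∑ i, (A.mulVec x i - y i)^2)/2 + (-∑ i, (x i)^2)/2) := by
          rw [Real.exp_add]; ring
      _ = (2 * Real.pi) ^ (-(d : ℝ) / 2) *
            Real.exp (-(y ⬝ᵥ y - m ⬝ᵥ (C+1) *ᵥ m)/2 + -((x - m) ⬝ᵥ (C+1) *ᵥ (x - m))/2) := by
          rw [show (-∑ i, (A.mulVec x i - y i)^2)/2 + (-∑ i, (x i)^2)/2
            = -(y ⬝ᵥ y - m ⬝ᵥ (C+1) *ᵥ m)/2 + -((x - m) ⬝ᵥ (C+1) *ᵥ (x - m))/2 by linarith]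
      _ = (2 * Real.pi) ^ (-(d : ℝ) / 2) * Real.exp (-(y ⬝ᵥ y - m ⬝ᵥ (C+1) *ᵥ m)/2) *
            Real.exp (-((x - m) ⬝ᵥ (C+1) *ᵥ (x - m))/2) := by
          rw [Real.exp_add]; ring
  have hKpos : 0 < K := by
    rw [hK]
    have h2π : (0:ℝ) < 2 * Real.pi := by have := Real.pi_pos; linarith
    positivity
  set T0 : ℝ := ∏ r, ∫ s, oneD (dc r) 0 s with hT0
  have hT0pos : 0 < T0 := Finset.prod_pos fun r _ => oneD_zero_pos (hpos r)
  -- compute Z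
  have hZval : Z = K * T0 := by
    rw [hZ]
    have h1 : (fun x => f x * μ x)
        = fun x => K * Real.exp (-((x - m) ⬝ᵥ (C+1) *ᵥ (x - m))/2) := funext hfμ
    rw [h1, integral_const_mul]
    congr 1
    have h2 : ∫ x : Fin d → ℝ, Real.exp (-((x - m) ⬝ᵥ (C+1) *ᵥ (x - m))/2)
        = ∫ z : Fin d → ℝ, Real.exp (-(z ⬝ᵥ (C+1) *ᵥ z)/2) := by
      rw [← integral_add_right_eq_self
        (fun x => Real.exp (-((x - m) ⬝ᵥ (C+1) *ᵥ (x - m))/2)) m]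
      congr 1
      funext z
      simp only [add_sub_cancel_right]
    rw [h2, rotate _ measquad]
    rw [show (fun t : Fin d → ℝ => Real.exp (-((U *ᵥ t) ⬝ᵥ (C+1) *ᵥ (U *ᵥ t))/2))
        = fun t => ∏ r, oneD (dc r) 0 (t r) from funext fun t => by
          rw [eprod t, mono_eq_zero]]
    exact sep_integral dc (fun _ => 0)
  have hZne : Z ≠ 0 := by rw [hZval]; positivity
  -- entry of the quadratic matrix
  have hSentry : ∀ i j : Fin d, (C * (C+1)⁻¹ * C) i j
      = ∑ p, (U i p * ev p) * (U j p * ev p) / dc p := by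
    intro i j
    rw [hS, Matrix.mul_apply]
    refine Finset.sum_congr rfl fun p _ => ?_
    rw [Matrix.mul_diagonal]
    have hstar : (star U) p j = U j p := by
      rw [Matrix.star_eq_conjTranspose, conjTranspose_apply, star_trivial]
    rw [hstar]
    have h0 : (1 + ev p) ≠ 0 := by have := hpos p; intro h; apply absurd this; linarith
    have h0' : dc p ≠ 0 := ne_of_gt (hpos p)
    rw [hgv, hdc]
    ring
  have hCU : C * U = U * diagonal ev := by
    rw [spec, Matrix.mul_assoc, hU1', Matrix.mul_one]
  have hCUt : ∀ (t : Fin d → ℝ) (r : Fin d), (C *ᵥ (U *ᵥ t)) r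
      = ∑ p, (U r p * ev p) * t p := by
    intro t r
    rw [mulVec_mulVec, hCU]
    simp only [mulVec, dotProduct, mul_diagonal]
  -- now compute each entry of H1
  funext i j
  rw [hH1 i j]
  have hv : ∀ x : Fin d → ℝ, Aᵀ *ᵥ (A *ᵥ x - y) = C *ᵥ x - u := by
    intro x; rw [mulVec_sub, mulVec_mulVec]
  set Φ : (Fin d → ℝ) → ℝ := fun x => (C *ᵥ x - u) i * (C *ᵥ x - u) j *
    Real.exp (-((x - m) ⬝ᵥ (C+1) *ᵥ (x - m))/2) with hΦ
  have hre : (fun x => (Aᵀ *ᵥ (A *ᵥ x - y)) i * (Aᵀ *ᵥ (A *ᵥ x - y)) j * (f x * μ x / Z))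
      = fun x => (K/Z) * Φ x := by
    funext x
    rw [hv x, hfμ x, hΦ]
    ring
  rw [hre, integral_const_mul]
  have hshift : ∫ x, Φ x = ∫ z, Φ (z + m) := (integral_add_right_eq_self Φ m).symm
  set Φ2 : (Fin d → ℝ) → ℝ := fun z => (C *ᵥ z - m) i * (C *ᵥ z - m) j *
    Real.exp (-(z ⬝ᵥ (C+1) *ᵥ z)/2) with hΦ2
  have hCmz : ∀ z : Fin d → ℝ, C *ᵥ (z + m) - u = C *ᵥ z - m := by
    intro z
    have h5 : C *ᵥ m + m = u := by
      have h6 := hBm; rwa [add_mulVec, one_mulVec] at h6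
    rw [mulVec_add, ← h5]
    abel
  have hΦ21 : (fun z => Φ (z + m)) = Φ2 := by
    funext z
    rw [hΦ, hΦ2]
    simp only [hCmz z, add_sub_cancel_right]
  rw [hshift, hΦ21]
  have hmeasΦ2 : Measurable Φ2 := by
    rw [hΦ2]
    exact (((measmv C i).sub_const (m i)).mul ((measmv C j).sub_const (m j))).mul measquad
  rw [rotate Φ2 hmeasΦ2]
  set av : Fin d → ℝ := fun p => U i p * ev p with hav
  set bv : Fin d → ℝ := fun q => U j q * ev q with hbv
  set e : (Fin d → ℝ) → ℝ := fun t => ∏ r, Real.exp (-(dc r/2) * (t r)^2) with he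
  have hΦ2U : ∀ t, Φ2 (U *ᵥ t)
      = ((∑ p, av p * t p) - m i) * ((∑ q, bv q * t q) - m j) * e t := by
    intro t
    rw [hΦ2]
    simp only [Pi.sub_apply]
    rw [hCUt t i, hCUt t j, eprod t, he]
  set F1 : (Fin d → ℝ) → ℝ := fun t => ∑ p, ∑ q, (av p * bv q) *
      ∏ r, oneD (dc r) ((if r = p then 1 else 0) + (if r = q then 1 else 0)) (t r) with hF1
  set F2 : (Fin d → ℝ) → ℝ := fun t => ∑ q, (m i * bv q) *
      ∏ r, oneD (dc r) (if r = q then 1 else 0) (t r) with hF2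
  set F3 : (Fin d → ℝ) → ℝ := fun t => ∑ p, (m j * av p) *
      ∏ r, oneD (dc r) (if r = p then 1 else 0) (t r) with hF3
  set F4 : (Fin d → ℝ) → ℝ := fun t => (m i * m j) * ∏ r, oneD (dc r) 0 (t r) with hF4
  have hF1e : ∀ t, F1 t = (∑ p, av p * t p) * ((∑ q, bv q * t q) * e t) := by
    intro t
    rw [hF1]
    calc ∑ p, ∑ q, (av p * bv q) *
        ∏ r, oneD (dc r) ((if r = p then 1 else 0) + (if r = q then 1 else 0)) (t r)
        = ∑ p, ∑ q, (av p * t p) * ((bv q * t q) * e t) := by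
          refine Finset.sum_congr rfl fun p _ => Finset.sum_congr rfl fun q _ => ?_
          rw [mono_eq_pq, he]
          ring
      _ = ∑ p, (av p * t p) * ((∑ q, bv q * t q) * e t) := by
          refine Finset.sum_congr rfl fun p _ => ?_
          rw [← Finset.mul_sum, ← Finset.sum_mul]
      _ = (∑ p, av p * t p) * ((∑ q, bv q * t q) * e t) := by rw [← Finset.sum_mul]
  have hF2e : ∀ t, F2 t = m i * ((∑ q, bv q * t q) * e t) := by
    intro t
    rw [hF2]
    calc ∑ q, (m i * bv q) * ∏ r, oneD (dc r) (if r = q then 1 else 0) (t r)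
        = ∑ q, m i * ((bv q * t q) * e t) := by
          refine Finset.sum_congr rfl fun q _ => ?_
          rw [mono_eq_p, he]
          ring
      _ = m i * ((∑ q, bv q * t q) * e t) := by rw [← Finset.mul_sum, ← Finset.sum_mul]
  have hF3e : ∀ t, F3 t = m j * ((∑ p, av p * t p) * e t) := by
    intro t
    rw [hF3]
    calc ∑ p, (m j * av p) * ∏ r, oneD (dc r) (if r = p then 1 else 0) (t r)
        = ∑ p, m j * ((av p * t p) * e t) := by
          refine Finset.sum_congr rfl fun p _ => ?_
          rw [mono_eq_p, he]
          ring
      _ = m j * ((∑ p, av p * t p) * e t) := by rw [← Finset.mul_sum, ← Finset.sum_mul]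
  have hF4e : ∀ t, F4 t = (m i * m j) * e t := by
    intro t
    simp only [hF4, he]
    rw [mono_eq_zero]
  have hdecomp : (fun t => Φ2 (U *ᵥ t)) = fun t => F1 t - F2 t - F3 t + F4 t := by
    funext t
    rw [hΦ2U t, hF1e t, hF2e t, hF3e t, hF4e t]
    ring
  have hint1 : Integrable F1 := by
    rw [hF1]
    exact integrable_finset_sum _ fun p _ => integrable_finset_sum _ fun q _ =>
      (sep_integrable dc hpos _).const_mul _
  have hint2 : Integrable F2 := by
    rw [hF2]
    exact integrable_finset_sum _ fun q _ => (sep_integrable dc hpos _).const_mul _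
  have hint3 : Integrable F3 := by
    rw [hF3]
    exact integrable_finset_sum _ fun p _ => (sep_integrable dc hpos _).const_mul _
  have hint4 : Integrable F4 := by
    rw [hF4]
    exact (sep_integrable dc hpos _).const_mul _
  have h12 : Integrable (fun t : Fin d → ℝ => F1 t - F2 t) := hint1.sub hint2
  have h123 : Integrable (fun t : Fin d → ℝ => F1 t - F2 t - F3 t) := h12.sub hint3
  rw [hdecomp, integral_add h123 hint4, integral_sub h12 hint3, integral_sub hint1 hint2]
  have hI1 : ∫ t, F1 t = (∑ p, (av p * bv p) / dc p) * T0 := by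
    rw [hF1, integral_finset_sum _ (fun p _ => integrable_finset_sum _ fun q _ =>
      (sep_integrable dc hpos _).const_mul _)]
    have hinner : ∀ p : Fin d, (∫ t : Fin d → ℝ, ∑ q, (av p * bv q) *
        ∏ r, oneD (dc r) ((if r = p then 1 else 0) + (if r = q then 1 else 0)) (t r))
        = (av p * bv p) / dc p * T0 := by
      intro p
      rw [integral_finset_sum _ fun q _ => (sep_integrable dc hpos _).const_mul _]
      have hterm : ∀ q : Fin d, (∫ t : Fin d → ℝ, (av p * bv q) *
          ∏ r, oneD (dc r) ((if r = p then 1 else 0) + (if r = q then 1 else 0)) (t r))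
          = (av p * bv q) * ∏ r, ∫ s, oneD (dc r) ((if r = p then 1 else 0)
              + (if r = q then 1 else 0)) s := by
        intro q
        rw [integral_const_mul, sep_integral]
      rw [Finset.sum_congr rfl fun q _ => hterm q]
      rw [Finset.sum_eq_single p]
      · rw [val_pp dc hpos p, hT0]
        ring
      · intro q _ hqp
        rw [val_pq dc p q (fun h => hqp h.symm), mul_zero]
      · intro h
        exact absurd (Finset.mem_univ p) h
    rw [Finset.sum_congr rfl fun p _ => hinner p, Finset.sum_mul]
  have hI2 : ∫ t, F2 t = 0 := by
    rw [hF2, integral_finset_sum _ fun q _ => (sep_integrable dc hpos _).const_mul _]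
    apply Finset.sum_eq_zero
    intro q _
    rw [integral_const_mul, sep_integral, val_p dc q, mul_zero]
  have hI3 : ∫ t, F3 t = 0 := by
    rw [hF3, integral_finset_sum _ fun p _ => (sep_integrable dc hpos _).const_mul _]
    apply Finset.sum_eq_zero
    intro p _
    rw [integral_const_mul, sep_integral, val_p dc p, mul_zero]
  have hI4 : ∫ t, F4 t = (m i * m j) * T0 := by
    rw [hF4, integral_const_mul, sep_integral dc (fun _ => 0), hT0]
  rw [hI1, hI2, hI3, hI4, hZval]
  have hfin : K / (K * T0) * ((∑ p, av p * bv p / dc p) * T0 - 0 - 0 + m i * m j * T0)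
      = (∑ p, av p * bv p / dc p) + m i * m j := by
    field_simp
    ring
  rw [hfin]
  rw [Matrix.add_apply, hR, vecMulVec_apply, hSentry i j]

/-- In the linear Gaussian setting, with posterior
`π = N((C_A+I)⁻¹u, (C_A+I)⁻¹)` (`u = Aᵀy`, `C_A = AᵀA`) written as `π = fμ/Z`,
the matrix `H_1 = ∫ ∇log f ∇log fᵀ π dx` equals
`C_A(C_A+I)⁻¹C_A + (C_A+I)⁻¹ u uᵀ (C_A+I)⁻¹`, and
`λ_{k+1}(H_1) ≤ λ_k(C_A)²/(1 + λ_k(C_A))` for decreasingly ordered eigenvalues. -/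
theorem stmt_18 {d dy : ℕ} (A : Matrix (Fin dy) (Fin d) ℝ) (y : Fin dy → ℝ)
    (μ : (Fin d → ℝ) → ℝ)
    (hμ : ∀ x, μ x = (2 * Real.pi) ^ (-(d : ℝ) / 2) * Real.exp (-(∑ i, (x i) ^ 2) / 2))
    (f : (Fin d → ℝ) → ℝ)
    (hf : ∀ x, f x = Real.exp (-(∑ i, (A.mulVec x i - y i) ^ 2) / 2))
    (Z : ℝ) (hZ : Z = ∫ x, f x * μ x)
    (H1 : Matrix (Fin d) (Fin d) ℝ)
    (hH1 : ∀ i j, H1 i j =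
      ∫ x, (Aᵀ.mulVec (A.mulVec x - y) i) * (Aᵀ.mulVec (A.mulVec x - y) j) *
        (f x * μ x / Z))
    (hCA : (Aᵀ * A).IsHermitian)
    (hRHS : ((Aᵀ * A) * (Aᵀ * A + 1)⁻¹ * (Aᵀ * A) +
      (Aᵀ * A + 1)⁻¹ * Matrix.vecMulVec (Aᵀ.mulVec y) (Aᵀ.mulVec y) *
        (Aᵀ * A + 1)⁻¹).IsHermitian)
    (μ1 μC : Fin d → ℝ) (ha1 : Antitone μ1) (haC : Antitone μC)
    (e1 : ∃ σ : Equiv.Perm (Fin d), μ1 = hRHS.eigenvalues ∘ σ)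
    (eC : ∃ σ : Equiv.Perm (Fin d), μC = hCA.eigenvalues ∘ σ) :
    H1 = (Aᵀ * A) * (Aᵀ * A + 1)⁻¹ * (Aᵀ * A) +
        (Aᵀ * A + 1)⁻¹ * Matrix.vecMulVec (Aᵀ.mulVec y) (Aᵀ.mulVec y) *
          (Aᵀ * A + 1)⁻¹ ∧
      ∀ (k : ℕ) (hk : k + 1 < d),
        μ1 ⟨k + 1, hk⟩ ≤ (μC ⟨k, by omega⟩) ^ 2 / (1 + μC ⟨k, by omega⟩) := by
  constructor
  · exact H1_eq A y μ hμ f hf Z hZ H1 hH1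
  · intro k hk
    have hCpsd : (Aᵀ * A).PosSemidef := by
      have h := Matrix.posSemidef_conjTranspose_mul_self A
      rwa [Matrix.conjTranspose_eq_transpose_of_trivial] at h
    exact eig_bound (Aᵀ * A) hCA hCpsd (Aᵀ.mulVec y) hRHS μ1 μC ha1 haC e1 eC k hk
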